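/- If D ⊊ R^n is a bounded domain, then for all x, y ∈ D, p_D(x,y) ≤ (diam(D)/√2) · c_D(x,y). -/
import Mathlib

open Metric Set

abbrev E (n : ℕ) := EuclideanSpace ℝ (Fin n)

/-- The Cassinian metric of a domain `D`. -/
noncomputable def cassinian {n : ℕ} (D : Set (E n)) (x y : E n) : ℝ :=
  ⨆ p : frontier D, dist x y / (dist x (p : E n) * dist (p : E n) y)

/-- The quantity p_D. -/
noncomputable def pdist {n : ℕ} (D : Set (E n)) (x y : E n) : ℝ :=
  dist x y / Real.sqrt (dist x y ^ 2 + 4 * infDist x (frontier D) * infDist y (frontier D))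

lemma pdist_symm {n : ℕ} (D : Set (E n)) (x y : E n) : pdist D x y = pdist D y x := by
  unfold pdist
  rw [dist_comm y x]
  ring_nf

lemma cassinian_symm {n : ℕ} (D : Set (E n)) (x y : E n) :
    cassinian D x y = cassinian D y x := by
  unfold cassinian
  congr 1
  ext p
  rw [dist_comm y x, dist_comm y (p : E n), dist_comm (p : E n) x, mul_comm]

lemma key {n : ℕ} (D : Set (E n)) (hD : IsOpen D) (hF : (frontier D).Nonempty)
    (hDb : Bornology.IsBounded D) (x y : E n) (hx : x ∈ D) (hy : y ∈ D)
    (hle : infDist x (frontier D) ≤ infDist y (frontier D)) :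
    pdist D x y ≤ (Metric.diam D / Real.sqrt 2) * cassinian D x y := by
  have hFc : IsClosed (frontier D) := isClosed_frontier
  have hxF : x ∉ frontier D := fun h => (hD.frontier_eq ▸ h).2 hx
  have hyF : y ∉ frontier D := fun h => (hD.frontier_eq ▸ h).2 hy
  have hδx : 0 < infDist x (frontier D) := by
    exact (hFc.notMem_iff_infDist_pos hF).mp hxF
  have hδy : 0 < infDist y (frontier D) := by
    exact (hFc.notMem_iff_infDist_pos hF).mp hyF
  obtain ⟨p, hpF, hpd⟩ := hFc.exists_infDist_eq_dist hF x
  set δx := infDist x (frontier D) with hδxdef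
  set δy := infDist y (frontier D) with hδydef
  set d := dist x y with hd
  have hd0 : 0 ≤ d := dist_nonneg
  have hb : 0 < dist p y := dist_pos.mpr (fun h => hyF (h ▸ hpF))
  have hbdiam : dist p y ≤ Metric.diam D := by
    have h1 : dist p y ≤ Metric.diam (closure D) :=
      Metric.dist_le_diam_of_mem hDb.closure (frontier_subset_closure hpF)
        (subset_closure hy)
    rwa [Metric.diam_closure] at h1
  have hs2 : (0:ℝ) < Real.sqrt 2 := by positivity
  have hs2le : Real.sqrt 2 ≤ 2 := by
    nlinarith [Real.sq_sqrt (by norm_num : (2:ℝ) ≥ 0), Real.sqrt_nonneg 2]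
  -- step 1: pdist ≤ d / (2 δx)
  have step1 : pdist D x y ≤ d / (2 * δx) := by
    unfold pdist
    rw [← hd, ← hδxdef, ← hδydef]
    have hsq : 2 * δx ≤ Real.sqrt (d ^ 2 + 4 * δx * δy) := by
      have h1 : (2 * δx) ^ 2 ≤ d ^ 2 + 4 * δx * δy := by nlinarith
      calc 2 * δx = Real.sqrt ((2 * δx) ^ 2) := (Real.sqrt_sq (by positivity)).symm
        _ ≤ Real.sqrt (d ^ 2 + 4 * δx * δy) := Real.sqrt_le_sqrt h1
    gcongr
  -- step 2: term at p ≤ cassinian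
  have step2 : d / (dist x p * dist p y) ≤ cassinian D x y := by
    have hbdd : BddAbove (range fun q : frontier D => d / (dist x (q : E n) * dist (q : E n) y)) := by
      refine ⟨d / (δx * δy), ?_⟩
      rintro _ ⟨q, rfl⟩
      have h1 : δx ≤ dist x (q : E n) := infDist_le_dist_of_mem q.2
      have h2 : δy ≤ dist (q : E n) y := by
        rw [dist_comm]; exact infDist_le_dist_of_mem q.2
      exact div_le_div_of_nonneg_left hd0 (mul_pos hδx hδy)
        (mul_le_mul h1 h2 hδy.le dist_nonneg)
    exact le_ciSup hbdd (⟨p, hpF⟩ : frontier D)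
  -- step 3
  have step3 : d / (2 * δx) ≤ (Metric.diam D / Real.sqrt 2) * (d / (dist x p * dist p y)) := by
    have hxp : dist x p = δx := hpd.symm
    rw [hxp, div_mul_div_comm,
      div_le_div_iff₀ (mul_pos two_pos hδx) (mul_pos hs2 (mul_pos hδx hb))]
    nlinarith [mul_nonneg (mul_nonneg hd0 hδx.le) (mul_nonneg hb.le hs2.le),
      mul_le_mul hbdiam hs2le hs2.le (Metric.diam_nonneg),
      mul_nonneg hd0 hδx.le, mul_pos hδx hb]
  calc pdist D x y ≤ d / (2 * δx) := step1
    _ ≤ (Metric.diam D / Real.sqrt 2) * (d / (dist x p * dist p y)) := step3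
    _ ≤ (Metric.diam D / Real.sqrt 2) * cassinian D x y := by
        apply mul_le_mul_of_nonneg_left step2 (by positivity)

theorem pdist_le_diam_cassinian (n : ℕ) (hn : 2 ≤ n) (D : Set (E n)) (hD : IsOpen D)
    (hDc : IsConnected D) (hDp : D ≠ univ) (hDb : Bornology.IsBounded D)
    (x y : E n) (hx : x ∈ D) (hy : y ∈ D) :
    pdist D x y ≤ (Metric.diam D / Real.sqrt 2) * cassinian D x y := by
  have hne : D.Nonempty := hDc.nonempty
  have hF : (frontier D).Nonempty := by
    by_contra h
    rw [not_nonempty_iff_eq_empty] at h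
    have hcl : IsClopen D := isClopen_iff_frontier_eq_empty.mpr h
    rcases isClopen_iff.mp hcl with h' | h'
    · exact hne.ne_empty h'
    · exact hDp h'
  rcases le_total (infDist x (frontier D)) (infDist y (frontier D)) with hle | hle
  · exact key D hD hF hDb x y hx hy hle
  · rw [pdist_symm, cassinian_symm]
    exact key D hD hF hDb y x hy hx hle
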